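/- With P, P̃, i₀, j₀ as in the previous construction: if P' ≥ P̃ is a GT pattern with the same bounding sequence and P'' is obtained from P' by decreasing by 1 exactly one entry in each of rows i₀, …, j₀−1 and P'' = P, then P' = P̃. -/
import Mathlib


/-- A Gelfand–Tsetlin pattern for `sl_{r+1}`: rows are indexed `1,…,r+1`,
row `j` has entries `P j 1 ≥ … ≥ P j j`, with the interlacing condition
`P j i ≥ P (j-1) i ≥ P j (i+1)` for `1 ≤ i < j ≤ r+1`. -/
def IsGTPattern (r : ℕ) (P : ℕ → ℕ → ℤ) : Prop :=
  ∀ i j, 1 ≤ i → i < j → j ≤ r + 1 → P (j-1) i ≤ P j i ∧ P j (i+1) ≤ P (j-1) i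

/-- The bounding sequence (last row) of the pattern is `lam`. -/
def Bounded (r : ℕ) (P : ℕ → ℕ → ℤ) (lam : ℕ → ℤ) : Prop :=
  ∀ i, 1 ≤ i → i ≤ r + 1 → P (r+1) i = lam i

/-- Row-wise dominance: `Dom r P' P` means the partial row sums of `P'`
dominate those of `P` in every row. -/
def Dom (r : ℕ) (P' P : ℕ → ℕ → ℤ) : Prop :=
  ∀ j i, 1 ≤ i → i ≤ j → j ≤ r + 1 →
    ∑ s ∈ Finset.Icc 1 i, P j s ≤ ∑ s ∈ Finset.Icc 1 i, P' j s

/-- The `k`-th coordinate of the weight of a pattern: difference of row sums. -/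
def wt (P : ℕ → ℕ → ℤ) (k : ℕ) : ℤ :=
  (∑ i ∈ Finset.Icc 1 k, P k i) - ∑ i ∈ Finset.Icc 1 (k-1), P (k-1) i

/-- The length of a pattern. -/
def lengthP (r : ℕ) (P : ℕ → ℕ → ℤ) : ℤ :=
  ∑ j ∈ Finset.Icc 2 (r+1), ∑ i ∈ Finset.Icc 1 (j-1), (P j i - P (j-1) i)

/-- With P, Pt, i₀, j₀ as in the basic construction: if P' ≥ Pt is a GT pattern
with the same bounding sequence and P'' is obtained from P' by decreasing by 1
exactly one entry in each of rows i₀, …, j₀-1, and P'' = P, then P' = Pt. -/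
theorem doubleprime_eq_forces (r : ℕ) (lam : ℕ → ℤ) (P Pt : ℕ → ℕ → ℤ) (i₀ j₀ : ℕ)
    (hP : IsGTPattern r P) (hb : Bounded r P lam)
    (hlen : 0 < lengthP r P)
    (hj₀2 : 2 ≤ j₀) (hj₀r : j₀ ≤ r + 1)
    (hj₀d : ∃ i, 1 ≤ i ∧ i < j₀ ∧ P j₀ i ≠ P (j₀-1) i)
    (hjmin : ∀ j, 2 ≤ j → j < j₀ → ∀ i, 1 ≤ i → i < j → P j i = P (j-1) i)
    (hi₀1 : 1 ≤ i₀) (hi₀j : i₀ < j₀) (hi₀d : P j₀ i₀ ≠ P (j₀-1) i₀)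
    (himin : ∀ i, 1 ≤ i → i < i₀ → P j₀ i = P (j₀-1) i)
    (hPt : ∀ j i, Pt j i = if i = i₀ ∧ i₀ ≤ j ∧ j < j₀ then P j i + 1 else P j i)
    (P' P'' : ℕ → ℕ → ℤ) (c : ℕ → ℕ)
    (hP' : IsGTPattern r P') (hb' : Bounded r P' lam) (hdom : Dom r P' Pt)
    (hc : ∀ j, i₀ ≤ j → j < j₀ → 1 ≤ c j ∧ c j ≤ j)
    (hP'' : ∀ j i, P'' j i =
      if i₀ ≤ j ∧ j < j₀ ∧ i = c j then P' j i - 1 else P' j i)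
    (hP''pat : IsGTPattern r P'')
    (hPPeq : ∀ j i, 1 ≤ i → i ≤ j → j ≤ r + 1 → P'' j i = P j i) :
    ∀ j i, 1 ≤ i → i ≤ j → j ≤ r + 1 → P' j i = Pt j i := by

  -- `key`: explicit formula for P' in the triangular region
  have key : ∀ j i, 1 ≤ i → i ≤ j → j ≤ r + 1 →
      P' j i = if i₀ ≤ j ∧ j < j₀ ∧ i = c j then P j i + 1 else P j i := by
    intro j i h1 h2 h3
    have h := hP'' j i
    rw [hPPeq j i h1 h2 h3] at h
    by_cases hcond : i₀ ≤ j ∧ j < j₀ ∧ i = c j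
    · simp only [if_pos hcond] at h ⊢; omega
    · simp only [if_neg hcond] at h ⊢; omega
  -- Step 1: c j ≤ i₀ for j in range, from dominance
  have hcle : ∀ j, i₀ ≤ j → j < j₀ → c j ≤ i₀ := by
    intro j hij hjj
    have hjr : j ≤ r + 1 := le_trans (le_of_lt hjj) hj₀r
    have hsPt : ∑ s ∈ Finset.Icc 1 i₀, Pt j s
        = (∑ s ∈ Finset.Icc 1 i₀, P j s) + 1 := by
      have hpt : ∀ s ∈ Finset.Icc 1 i₀, Pt j s = P j s + (if s = i₀ then 1 else 0) := by
        intro s hs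
        rw [hPt]
        by_cases hsi : s = i₀
        · simp [hsi, hij, hjj]
        · simp [hsi]
      rw [Finset.sum_congr rfl hpt, Finset.sum_add_distrib,
        Finset.sum_ite_eq' (Finset.Icc 1 i₀) i₀ (fun _ => (1:ℤ))]
      simp [hi₀1]
    have hsP' : ∑ s ∈ Finset.Icc 1 i₀, P' j s
        = (∑ s ∈ Finset.Icc 1 i₀, P j s) + (if c j ∈ Finset.Icc 1 i₀ then 1 else 0) := by
      have hp' : ∀ s ∈ Finset.Icc 1 i₀, P' j s = P j s + (if s = c j then 1 else 0) := by
        intro s hs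
        simp only [Finset.mem_Icc] at hs
        rw [key j s hs.1 (le_trans hs.2 hij) hjr]
        by_cases hsc : s = c j
        · simp [hsc, hij, hjj]
        · simp [hsc]
      rw [Finset.sum_congr rfl hp', Finset.sum_add_distrib,
        Finset.sum_ite_eq' (Finset.Icc 1 i₀) (c j) (fun _ => (1:ℤ))]
    have hd := hdom j i₀ hi₀1 hij hjr
    rw [hsPt, hsP'] at hd
    by_contra hgt
    have : c j ∉ Finset.Icc 1 i₀ := by simp [Finset.mem_Icc]; omega
    rw [if_neg this] at hd
    omega
  -- Step 2: c j = i₀ for all j in range, by downward induction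
  have hceq : ∀ n j, j₀ - 1 - j ≤ n → i₀ ≤ j → j < j₀ → c j = i₀ := by
    intro n
    induction n with
    | zero =>
      intro j hn hij hjj
      have hjtop : j = j₀ - 1 := by omega
      subst hjtop
      by_contra hne
      have hclt : c (j₀ - 1) < i₀ := lt_of_le_of_ne (hcle _ hij hjj) hne
      have hc1 : 1 ≤ c (j₀ - 1) := (hc _ hij hjj).1
      -- interlacing of P' between rows j₀-1 and j₀
      have hint := (hP' (c (j₀-1)) j₀ hc1 (by omega) hj₀r).1
      have e1 : P' (j₀-1) (c (j₀-1)) = P (j₀-1) (c (j₀-1)) + 1 := by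
        rw [key (j₀-1) (c (j₀-1)) hc1 (by omega) (by omega)]
        simp [hij, hjj]
      have e2 : P' j₀ (c (j₀-1)) = P j₀ (c (j₀-1)) := by
        rw [key j₀ (c (j₀-1)) hc1 (by omega) hj₀r]
        simp
      have e3 : P j₀ (c (j₀-1)) = P (j₀-1) (c (j₀-1)) := himin _ hc1 hclt
      omega
    | succ n ih =>
      intro j hn hij hjj
      by_cases hjtop : j = j₀ - 1
      · exact ih j (by omega) hij hjj
      · have hj1 : j + 1 < j₀ := by omega
        have hnext : c (j + 1) = i₀ := ih (j+1) (by omega) (by omega) hj1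
        by_contra hne
        have hclt : c j < i₀ := lt_of_le_of_ne (hcle _ hij hjj) hne
        have hc1 : 1 ≤ c j := (hc _ hij hjj).1
        have hint := (hP' (c j) (j+1) hc1 (by omega) (by omega)).1
        simp only [Nat.add_sub_cancel] at hint
        have e1 : P' j (c j) = P j (c j) + 1 := by
          rw [key j (c j) hc1 (by omega) (by omega)]
          simp [hij, hjj]
        have e2 : P' (j+1) (c j) = P (j+1) (c j) := by
          rw [key (j+1) (c j) hc1 (by omega) (by omega)]
          have : ¬ (c j = c (j+1)) := by omega
          simp [this]
        have e3 : P (j+1) (c j) = P j (c j) := by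
          have := hjmin (j+1) (by omega) hj1 (c j) hc1 (by omega)
          simpa using this
        omega
  -- Conclusion
  intro j i h1 h2 h3
  rw [key j i h1 h2 h3, hPt]
  by_cases hrange : i₀ ≤ j ∧ j < j₀
  · have hcj : c j = i₀ := hceq (j₀ - 1 - j) j le_rfl hrange.1 hrange.2
    by_cases hii : i = i₀
    · simp [hii, hcj, hrange.1, hrange.2]
    · have : ¬ (i = c j) := by omega
      simp [hii, this, hrange]
  · have h1' : ¬ (i₀ ≤ j ∧ j < j₀ ∧ i = c j) := by tauto
    have h2' : ¬ (i = i₀ ∧ i₀ ≤ j ∧ j < j₀) := by tauto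
    simp [h1', h2']
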